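/- arXiv:hep-th/9308072 — 4 statements merged into one kernel-verified Lean document; each statement's English description precedes it below -/
import Mathlib

section
/- Let R and R' be q-Hecke Yang-Baxter operators on X and Y respectively. Define Q on (X⊕Y)⊗(X⊕Y) by Q|_{X⊗X} = R, Q|_{Y⊗Y} = R', Q(x⊗y) = y⊗x, and Q(y⊗x) = x⊗y + (q - q⁻¹)·y⊗x. Then Q satisfies the quantum Yang-Baxter equation (Q⊗1)(1⊗Q)(Q⊗1) = (1⊗Q)(Q⊗1)(1⊗Q) on (X⊕Y)^{⊗3}. -/
open TensorProduct LinearMap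

/-- The quantum Yang-Baxter (braid) relation `(Q⊗1)(1⊗Q)(Q⊗1) = (1⊗Q)(Q⊗1)(1⊗Q)`
for an operator on `V ⊗ V`, stated on `(V ⊗ V) ⊗ V`. -/
def Braid {k : Type*} [Field k] {V : Type*} [AddCommGroup V] [Module k V]
    (Q : V ⊗[k] V →ₗ[k] V ⊗[k] V) : Prop :=
  Q.rTensor V ∘ₗ
      ((TensorProduct.assoc k V V V).symm.toLinearMap ∘ₗ Q.lTensor V ∘ₗ
        (TensorProduct.assoc k V V V).toLinearMap) ∘ₗ
      Q.rTensor V =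
    ((TensorProduct.assoc k V V V).symm.toLinearMap ∘ₗ Q.lTensor V ∘ₗ
        (TensorProduct.assoc k V V V).toLinearMap) ∘ₗ
      Q.rTensor V ∘ₗ
      ((TensorProduct.assoc k V V V).symm.toLinearMap ∘ₗ Q.lTensor V ∘ₗ
        (TensorProduct.assoc k V V V).toLinearMap)

namespace BraidGlue

variable {k : Type*} [Field k] {W : Type*} [AddCommGroup W] [Module k W]

/-- `rTensor` of `Q`, acting on slots 1,2 of `(W ⊗ W) ⊗ W`. -/
noncomputable def Lop (Q : W ⊗[k] W →ₗ[k] W ⊗[k] W) :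
    (W ⊗[k] W) ⊗[k] W →ₗ[k] (W ⊗[k] W) ⊗[k] W := Q.rTensor W

/-- conjugated `lTensor` of `Q`, acting on slots 2,3 of `(W ⊗ W) ⊗ W`. -/
noncomputable def Mop (Q : W ⊗[k] W →ₗ[k] W ⊗[k] W) :
    (W ⊗[k] W) ⊗[k] W →ₗ[k] (W ⊗[k] W) ⊗[k] W :=
  (TensorProduct.assoc k W W W).symm.toLinearMap ∘ₗ Q.lTensor W ∘ₗ
    (TensorProduct.assoc k W W W).toLinearMap

/-- attach `a` on the left of a 2-tensor, producing a 3-tensor. -/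
noncomputable def att (a : W) : (W ⊗[k] W) →ₗ[k] (W ⊗[k] W) ⊗[k] W :=
  (TensorProduct.assoc k W W W).symm.toLinearMap ∘ₗ TensorProduct.mk k W (W ⊗[k] W) a

variable (Q : W ⊗[k] W →ₗ[k] W ⊗[k] W)

lemma att_tmul (a p q : W) : att a (p ⊗ₜ[k] q) = (a ⊗ₜ[k] p) ⊗ₜ[k] q := by
  simp [att]

lemma Lop_tmul (u : W ⊗[k] W) (c : W) : Lop Q (u ⊗ₜ[k] c) = Q u ⊗ₜ[k] c := rfl

lemma Mop_tmul (a b c : W) : Mop Q ((a ⊗ₜ[k] b) ⊗ₜ[k] c) = att a (Q (b ⊗ₜ[k] c)) := by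
  simp [Mop, att]

lemma Mop_att (a : W) (v : W ⊗[k] W) : Mop Q (att a v) = att a (Q v) := by
  induction v using TensorProduct.induction_on with
  | zero => simp
  | tmul p q => rw [att_tmul, Mop_tmul]
  | add v w hv hw => simp [map_add, hv, hw]

end BraidGlue

namespace BraidGlue

section Family

variable {k : Type*} [Field k] {W X Y : Type*}
  [AddCommGroup W] [Module k W] [AddCommGroup X] [Module k X]
  [AddCommGroup Y] [Module k Y]
  (Q : W ⊗[k] W →ₗ[k] W ⊗[k] W) (ix : X →ₗ[k] W) (iy : Y →ₗ[k] W)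

/-- `v` in slots 1,2, `y` in slot 3. -/
noncomputable def E1 (y : Y) : X ⊗[k] X →ₗ[k] (W ⊗[k] W) ⊗[k] W :=
  (TensorProduct.mk k (W ⊗[k] W) W).flip (iy y) ∘ₗ TensorProduct.map ix ix

/-- `y` in slot 2. -/
noncomputable def E2 (y : Y) : X ⊗[k] X →ₗ[k] (W ⊗[k] W) ⊗[k] W :=
  TensorProduct.map ((TensorProduct.mk k W W).flip (iy y) ∘ₗ ix) ix

/-- `y` in slot 1. -/
noncomputable def E3 (y : Y) : X ⊗[k] X →ₗ[k] (W ⊗[k] W) ⊗[k] W :=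
  att (iy y) ∘ₗ TensorProduct.map ix ix

lemma E1_tmul (y : Y) (a b : X) :
    E1 (W := W) ix iy y (a ⊗ₜ[k] b) = (ix a ⊗ₜ[k] ix b) ⊗ₜ[k] iy y := rfl

lemma E2_tmul (y : Y) (a b : X) :
    E2 (W := W) ix iy y (a ⊗ₜ[k] b) = (ix a ⊗ₜ[k] iy y) ⊗ₜ[k] ix b := rfl

lemma E3_tmul (y : Y) (a b : X) :
    E3 (W := W) ix iy y (a ⊗ₜ[k] b) = (iy y ⊗ₜ[k] ix a) ⊗ₜ[k] ix b := by
  simp [E3, att_tmul]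

variable (R : X ⊗[k] X →ₗ[k] X ⊗[k] X) (lam mu : k)
variable (hxx : ∀ u : X ⊗[k] X, Q (TensorProduct.map ix ix u) = TensorProduct.map ix ix (R u))
variable (hxy : ∀ (x : X) (y : Y),
  Q (ix x ⊗ₜ[k] iy y) = iy y ⊗ₜ[k] ix x + mu • (ix x ⊗ₜ[k] iy y))
variable (hyx : ∀ (y : Y) (x : X),
  Q (iy y ⊗ₜ[k] ix x) = ix x ⊗ₜ[k] iy y + lam • (iy y ⊗ₜ[k] ix x))

section Rules
include hxx

lemma e1L (y : Y) (v : X ⊗[k] X) :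
    Lop Q (E1 ix iy y v) = E1 ix iy y (R v) := by
  simp only [E1, coe_comp, Function.comp_apply, flip_apply, TensorProduct.mk_apply,
    Lop_tmul, hxx]

lemma e3M (y : Y) (v : X ⊗[k] X) :
    Mop Q (E3 ix iy y v) = E3 ix iy y (R v) := by
  simp only [E3, coe_comp, Function.comp_apply, Mop_att, hxx]

end Rules

section Rules2
include hxy

lemma e1M (y : Y) (v : X ⊗[k] X) :
    Mop Q (E1 ix iy y v) = E2 ix iy y v + mu • E1 ix iy y v := by
  induction v using TensorProduct.induction_on with
  | zero => simp
  | tmul a b =>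
      simp only [E1_tmul, Mop_tmul, hxy, map_add, map_smul, att_tmul, E2_tmul]
  | add v w hv hw => simp only [map_add, hv, hw, smul_add]; abel

lemma e2L (y : Y) (v : X ⊗[k] X) :
    Lop Q (E2 ix iy y v) = E3 ix iy y v + mu • E2 ix iy y v := by
  induction v using TensorProduct.induction_on with
  | zero => simp
  | tmul a b =>
      simp only [E2_tmul, Lop_tmul, hxy, E3_tmul, add_tmul, smul_tmul']
  | add v w hv hw => simp only [map_add, hv, hw, smul_add]; abel

end Rules2

section Rules3
include hyx

lemma e2M (y : Y) (v : X ⊗[k] X) :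
    Mop Q (E2 ix iy y v) = E1 ix iy y v + lam • E2 ix iy y v := by
  induction v using TensorProduct.induction_on with
  | zero => simp
  | tmul a b =>
      simp only [E2_tmul, Mop_tmul, hyx, map_add, map_smul, att_tmul, E1_tmul]
  | add v w hv hw => simp only [map_add, hv, hw, smul_add]; abel

lemma e3L (y : Y) (v : X ⊗[k] X) :
    Lop Q (E3 ix iy y v) = E2 ix iy y v + lam • E3 ix iy y v := by
  induction v using TensorProduct.induction_on with
  | zero => simp
  | tmul a b =>
      simp only [E3_tmul, Lop_tmul, hyx, E2_tmul, add_tmul, smul_tmul']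
  | add v w hv hw => simp only [map_add, hv, hw, smul_add]; abel

end Rules3

section Cases
include hxx hxy hyx

variable (hecke : ∀ u : X ⊗[k] X, R (R u) = (lam + mu) • R u + u)
variable (hlm : lam * mu = 0)

include hecke hlm

lemma caseE1 (y : Y) (u : X ⊗[k] X) :
    Lop Q (Mop Q (Lop Q (E1 ix iy y u))) = Mop Q (Lop Q (Mop Q (E1 ix iy y u))) := by
  rcases mul_eq_zero.mp hlm with h | h <;> subst h <;>
  · simp only [e1L Q ix iy R hxx, e3M Q ix iy R hxx, e1M Q ix iy _ hxy,
      e2L Q ix iy _ hxy, e2M Q ix iy _ hyx, e3L Q ix iy _ hyx,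
      map_add, map_smul, smul_add, smul_smul, hecke, zero_add, add_zero,
      zero_smul, smul_zero, zero_mul, mul_zero]
    try module

lemma caseE2 (y : Y) (u : X ⊗[k] X) :
    Lop Q (Mop Q (Lop Q (E2 ix iy y u))) = Mop Q (Lop Q (Mop Q (E2 ix iy y u))) := by
  rcases mul_eq_zero.mp hlm with h | h <;> subst h <;>
  · simp only [e1L Q ix iy R hxx, e3M Q ix iy R hxx, e1M Q ix iy _ hxy,
      e2L Q ix iy _ hxy, e2M Q ix iy _ hyx, e3L Q ix iy _ hyx,
      map_add, map_smul, smul_add, smul_smul, hecke, zero_add, add_zero,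
      zero_smul, smul_zero, zero_mul, mul_zero]
    try module

lemma caseE3 (y : Y) (u : X ⊗[k] X) :
    Lop Q (Mop Q (Lop Q (E3 ix iy y u))) = Mop Q (Lop Q (Mop Q (E3 ix iy y u))) := by
  rcases mul_eq_zero.mp hlm with h | h <;> subst h <;>
  · simp only [e1L Q ix iy R hxx, e3M Q ix iy R hxx, e1M Q ix iy _ hxy,
      e2L Q ix iy _ hxy, e2M Q ix iy _ hyx, e3L Q ix iy _ hyx,
      map_add, map_smul, smul_add, smul_smul, hecke, zero_add, add_zero,
      zero_smul, smul_zero, zero_mul, mul_zero]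
    try module

end Cases

end Family

section Diagonal

variable {k : Type*} [Field k] {W X : Type*}
  [AddCommGroup W] [Module k W] [AddCommGroup X] [Module k X]
  (Q : W ⊗[k] W →ₗ[k] W ⊗[k] W) (ix : X →ₗ[k] W)
  (R : X ⊗[k] X →ₗ[k] X ⊗[k] X)
  (hxx : ∀ u : X ⊗[k] X, Q (TensorProduct.map ix ix u) = TensorProduct.map ix ix (R u))

include hxx

omit hxx in
lemma attJ (a : X) (v : X ⊗[k] X) :
    att (ix a) (TensorProduct.map ix ix v) =
      TensorProduct.map (TensorProduct.map ix ix) ix (att a v) := by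
  induction v using TensorProduct.induction_on with
  | zero => simp
  | tmul p q => simp [att_tmul]
  | add v w hv hw => simp [map_add, hv, hw]

lemma jL (w : (X ⊗[k] X) ⊗[k] X) :
    Lop Q (TensorProduct.map (TensorProduct.map ix ix) ix w) =
      TensorProduct.map (TensorProduct.map ix ix) ix (Lop R w) := by
  induction w using TensorProduct.induction_on with
  | zero => simp
  | tmul u c => rw [map_tmul, Lop_tmul, hxx, Lop_tmul, map_tmul]
  | add v w hv hw => simp [map_add, hv, hw]

lemma jM (w : (X ⊗[k] X) ⊗[k] X) :
    Mop Q (TensorProduct.map (TensorProduct.map ix ix) ix w) =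
      TensorProduct.map (TensorProduct.map ix ix) ix (Mop R w) := by
  induction w using TensorProduct.induction_on with
  | zero => simp
  | tmul u c =>
      induction u using TensorProduct.induction_on with
      | zero => simp
      | tmul a b =>
          rw [map_tmul, map_tmul, Mop_tmul, Mop_tmul, ← map_tmul, hxx]
          exact attJ ix a (R (b ⊗ₜ c))
      | add v w hv hw => simp only [add_tmul, map_add, hv, hw]
  | add v w hv hw => simp [map_add, hv, hw]

lemma caseJ (hbraid : Braid R) (w : (X ⊗[k] X) ⊗[k] X) :
    Lop Q (Mop Q (Lop Q (TensorProduct.map (TensorProduct.map ix ix) ix w))) =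
      Mop Q (Lop Q (Mop Q (TensorProduct.map (TensorProduct.map ix ix) ix w))) := by
  simp only [jL Q ix R hxx, jM Q ix R hxx]
  have hb := LinearMap.congr_fun hbraid w
  simp only [coe_comp, Function.comp_apply] at hb
  exact congrArg _ hb

end Diagonal

end BraidGlue


open BraidGlue

/-- the glueing `Q = R ⊕_q R'` of two `q`-Hecke Yang-Baxter operators
satisfies the quantum Yang-Baxter equation on `(X ⊕ Y)^{⊗3}`. -/
theorem stmt1 {k : Type*} [Field k] {X Y : Type*}
    [AddCommGroup X] [Module k X] [AddCommGroup Y] [Module k Y]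
    (q : k) (hq : q ≠ 0)
    (R : X ⊗[k] X →ₗ[k] X ⊗[k] X) (R' : Y ⊗[k] Y →ₗ[k] Y ⊗[k] Y)
    (hRbij : Function.Bijective R) (hR'bij : Function.Bijective R')
    (hRbraid : Braid R) (hR'braid : Braid R')
    (hRHecke : (R - q • LinearMap.id) ∘ₗ (R + q⁻¹ • LinearMap.id) = 0)
    (hR'Hecke : (R' - q • LinearMap.id) ∘ₗ (R' + q⁻¹ • LinearMap.id) = 0)
    (Q : (X × Y) ⊗[k] (X × Y) →ₗ[k] (X × Y) ⊗[k] (X × Y))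
    (hXX : Q ∘ₗ TensorProduct.map (LinearMap.inl k X Y) (LinearMap.inl k X Y) =
      TensorProduct.map (LinearMap.inl k X Y) (LinearMap.inl k X Y) ∘ₗ R)
    (hYY : Q ∘ₗ TensorProduct.map (LinearMap.inr k X Y) (LinearMap.inr k X Y) =
      TensorProduct.map (LinearMap.inr k X Y) (LinearMap.inr k X Y) ∘ₗ R')
    (hXY : ∀ (x : X) (y : Y),
      Q ((x, (0 : Y)) ⊗ₜ[k] ((0 : X), y)) = ((0 : X), y) ⊗ₜ[k] (x, (0 : Y)))
    (hYX : ∀ (y : Y) (x : X),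
      Q (((0 : X), y) ⊗ₜ[k] (x, (0 : Y))) =
        (x, (0 : Y)) ⊗ₜ[k] ((0 : X), y) +
          (q - q⁻¹) • (((0 : X), y) ⊗ₜ[k] (x, (0 : Y)))) :
    Braid Q := by

  -- pointwise sector relations
  have hxxE : ∀ u : X ⊗[k] X,
      Q (TensorProduct.map (LinearMap.inl k X Y) (LinearMap.inl k X Y) u) =
        TensorProduct.map (LinearMap.inl k X Y) (LinearMap.inl k X Y) (R u) := by
    intro u
    have h := LinearMap.congr_fun hXX u
    simpa using h
  have hxxF : ∀ u : Y ⊗[k] Y,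
      Q (TensorProduct.map (LinearMap.inr k X Y) (LinearMap.inr k X Y) u) =
        TensorProduct.map (LinearMap.inr k X Y) (LinearMap.inr k X Y) (R' u) := by
    intro u
    have h := LinearMap.congr_fun hYY u
    simpa using h
  have hxyE : ∀ (x : X) (y : Y),
      Q (LinearMap.inl k X Y x ⊗ₜ[k] LinearMap.inr k X Y y) =
        LinearMap.inr k X Y y ⊗ₜ[k] LinearMap.inl k X Y x +
          (0 : k) • (LinearMap.inl k X Y x ⊗ₜ[k] LinearMap.inr k X Y y) := by
    intro x y
    simpa [LinearMap.inl_apply, LinearMap.inr_apply] using hXY x y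
  have hyxE : ∀ (y : Y) (x : X),
      Q (LinearMap.inr k X Y y ⊗ₜ[k] LinearMap.inl k X Y x) =
        LinearMap.inl k X Y x ⊗ₜ[k] LinearMap.inr k X Y y +
          (q - q⁻¹) • (LinearMap.inr k X Y y ⊗ₜ[k] LinearMap.inl k X Y x) := by
    intro y x
    simpa [LinearMap.inl_apply, LinearMap.inr_apply] using hYX y x
  -- pointwise Hecke relations
  have heckeR : ∀ u : X ⊗[k] X, R (R u) = ((q - q⁻¹) + 0) • R u + u := by
    intro u
    have h := LinearMap.congr_fun hRHecke u
    simp only [coe_comp, Function.comp_apply, LinearMap.sub_apply, LinearMap.add_apply, LinearMap.smul_apply, id_apply,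
      map_add, map_smul, LinearMap.zero_apply, smul_sub, smul_smul, inv_mul_cancel₀ hq, one_smul] at h
    rw [add_zero, sub_smul, ← sub_eq_zero, ← h]
    abel
  have heckeR' : ∀ u : Y ⊗[k] Y, R' (R' u) = ((0 : k) + (q - q⁻¹)) • R' u + u := by
    intro u
    have h := LinearMap.congr_fun hR'Hecke u
    simp only [coe_comp, Function.comp_apply, LinearMap.sub_apply, LinearMap.add_apply, LinearMap.smul_apply, id_apply,
      map_add, map_smul, LinearMap.zero_apply, smul_sub, smul_smul, inv_mul_cancel₀ hq, one_smul] at h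
    rw [zero_add, sub_smul, ← sub_eq_zero, ← h]
    abel
  -- the eight sector cases
  have cXXY : ∀ (x1 x2 : X) (y : Y),
      Lop Q (Mop Q (Lop Q ((LinearMap.inl k X Y x1 ⊗ₜ[k] LinearMap.inl k X Y x2) ⊗ₜ[k]
        LinearMap.inr k X Y y))) =
      Mop Q (Lop Q (Mop Q ((LinearMap.inl k X Y x1 ⊗ₜ[k] LinearMap.inl k X Y x2) ⊗ₜ[k]
        LinearMap.inr k X Y y))) := by
    intro x1 x2 y
    have h := caseE1 Q (LinearMap.inl k X Y) (LinearMap.inr k X Y) R (q - q⁻¹) 0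
      hxxE hxyE hyxE heckeR (mul_zero _) y (x1 ⊗ₜ[k] x2)
    rwa [E1_tmul] at h
  have cXYX : ∀ (x1 : X) (y : Y) (x2 : X),
      Lop Q (Mop Q (Lop Q ((LinearMap.inl k X Y x1 ⊗ₜ[k] LinearMap.inr k X Y y) ⊗ₜ[k]
        LinearMap.inl k X Y x2))) =
      Mop Q (Lop Q (Mop Q ((LinearMap.inl k X Y x1 ⊗ₜ[k] LinearMap.inr k X Y y) ⊗ₜ[k]
        LinearMap.inl k X Y x2))) := by
    intro x1 y x2
    have h := caseE2 Q (LinearMap.inl k X Y) (LinearMap.inr k X Y) R (q - q⁻¹) 0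
      hxxE hxyE hyxE heckeR (mul_zero _) y (x1 ⊗ₜ[k] x2)
    rwa [E2_tmul] at h
  have cYXX : ∀ (y : Y) (x1 x2 : X),
      Lop Q (Mop Q (Lop Q ((LinearMap.inr k X Y y ⊗ₜ[k] LinearMap.inl k X Y x1) ⊗ₜ[k]
        LinearMap.inl k X Y x2))) =
      Mop Q (Lop Q (Mop Q ((LinearMap.inr k X Y y ⊗ₜ[k] LinearMap.inl k X Y x1) ⊗ₜ[k]
        LinearMap.inl k X Y x2))) := by
    intro y x1 x2
    have h := caseE3 Q (LinearMap.inl k X Y) (LinearMap.inr k X Y) R (q - q⁻¹) 0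
      hxxE hxyE hyxE heckeR (mul_zero _) y (x1 ⊗ₜ[k] x2)
    rwa [E3_tmul] at h
  have cYYX : ∀ (y1 y2 : Y) (x : X),
      Lop Q (Mop Q (Lop Q ((LinearMap.inr k X Y y1 ⊗ₜ[k] LinearMap.inr k X Y y2) ⊗ₜ[k]
        LinearMap.inl k X Y x))) =
      Mop Q (Lop Q (Mop Q ((LinearMap.inr k X Y y1 ⊗ₜ[k] LinearMap.inr k X Y y2) ⊗ₜ[k]
        LinearMap.inl k X Y x))) := by
    intro y1 y2 x
    have h := caseE1 Q (LinearMap.inr k X Y) (LinearMap.inl k X Y) R' 0 (q - q⁻¹)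
      hxxF hyxE hxyE heckeR' (zero_mul _) x (y1 ⊗ₜ[k] y2)
    rwa [E1_tmul] at h
  have cYXY : ∀ (y1 : Y) (x : X) (y2 : Y),
      Lop Q (Mop Q (Lop Q ((LinearMap.inr k X Y y1 ⊗ₜ[k] LinearMap.inl k X Y x) ⊗ₜ[k]
        LinearMap.inr k X Y y2))) =
      Mop Q (Lop Q (Mop Q ((LinearMap.inr k X Y y1 ⊗ₜ[k] LinearMap.inl k X Y x) ⊗ₜ[k]
        LinearMap.inr k X Y y2))) := by
    intro y1 x y2
    have h := caseE2 Q (LinearMap.inr k X Y) (LinearMap.inl k X Y) R' 0 (q - q⁻¹)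
      hxxF hyxE hxyE heckeR' (zero_mul _) x (y1 ⊗ₜ[k] y2)
    rwa [E2_tmul] at h
  have cXYY : ∀ (x : X) (y1 y2 : Y),
      Lop Q (Mop Q (Lop Q ((LinearMap.inl k X Y x ⊗ₜ[k] LinearMap.inr k X Y y1) ⊗ₜ[k]
        LinearMap.inr k X Y y2))) =
      Mop Q (Lop Q (Mop Q ((LinearMap.inl k X Y x ⊗ₜ[k] LinearMap.inr k X Y y1) ⊗ₜ[k]
        LinearMap.inr k X Y y2))) := by
    intro x y1 y2
    have h := caseE3 Q (LinearMap.inr k X Y) (LinearMap.inl k X Y) R' 0 (q - q⁻¹)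
      hxxF hyxE hxyE heckeR' (zero_mul _) x (y1 ⊗ₜ[k] y2)
    rwa [E3_tmul] at h
  have cXXX : ∀ (x1 x2 x3 : X),
      Lop Q (Mop Q (Lop Q ((LinearMap.inl k X Y x1 ⊗ₜ[k] LinearMap.inl k X Y x2) ⊗ₜ[k]
        LinearMap.inl k X Y x3))) =
      Mop Q (Lop Q (Mop Q ((LinearMap.inl k X Y x1 ⊗ₜ[k] LinearMap.inl k X Y x2) ⊗ₜ[k]
        LinearMap.inl k X Y x3))) := by
    intro x1 x2 x3
    have h := caseJ Q (LinearMap.inl k X Y) R hxxE hRbraid ((x1 ⊗ₜ[k] x2) ⊗ₜ[k] x3)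
    simpa only [map_tmul] using h
  have cYYY : ∀ (y1 y2 y3 : Y),
      Lop Q (Mop Q (Lop Q ((LinearMap.inr k X Y y1 ⊗ₜ[k] LinearMap.inr k X Y y2) ⊗ₜ[k]
        LinearMap.inr k X Y y3))) =
      Mop Q (Lop Q (Mop Q ((LinearMap.inr k X Y y1 ⊗ₜ[k] LinearMap.inr k X Y y2) ⊗ₜ[k]
        LinearMap.inr k X Y y3))) := by
    intro y1 y2 y3
    have h := caseJ Q (LinearMap.inr k X Y) R' hxxF hR'braid ((y1 ⊗ₜ[k] y2) ⊗ₜ[k] y3)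
    simpa only [map_tmul] using h
  -- assemble
  show Lop Q ∘ₗ Mop Q ∘ₗ Lop Q = Mop Q ∘ₗ Lop Q ∘ₗ Mop Q
  apply TensorProduct.ext_threefold
  intro a b c
  obtain ⟨xa, ya⟩ := a
  obtain ⟨xb, yb⟩ := b
  obtain ⟨xc, yc⟩ := c
  have ha : ((xa, ya) : X × Y) = LinearMap.inl k X Y xa + LinearMap.inr k X Y ya := by simp
  have hb : ((xb, yb) : X × Y) = LinearMap.inl k X Y xb + LinearMap.inr k X Y yb := by simp
  have hc : ((xc, yc) : X × Y) = LinearMap.inl k X Y xc + LinearMap.inr k X Y yc := by simp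
  rw [ha, hb, hc]
  simp only [coe_comp, Function.comp_apply, tmul_add, add_tmul, map_add]
  rw [cXXX, cXXY, cXYX, cXYY, cYXX, cYXY, cYYX, cYYY]
end

section
/- The glueing Q = R ⊕_q R' of two q-Hecke Yang-Baxter operators R on X and R' on Y is itself a q-Hecke operator, i.e. (Q - q)(Q + q⁻¹) = 0 on (X⊕Y)⊗(X⊕Y). -/
open TensorProduct LinearMap

/-- the glueing `Q = R ⊕_q R'` of two `q`-Hecke Yang-Baxter operators
is itself a `q`-Hecke operator, i.e. `(Q - q)(Q + q⁻¹) = 0` on `(X⊕Y)⊗(X⊕Y)`. -/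
theorem stmt2 {k : Type*} [Field k] {X Y : Type*}
    [AddCommGroup X] [Module k X] [AddCommGroup Y] [Module k Y]
    (q : k) (hq : q ≠ 0)
    (R : X ⊗[k] X →ₗ[k] X ⊗[k] X) (R' : Y ⊗[k] Y →ₗ[k] Y ⊗[k] Y)
    (hRbij : Function.Bijective R) (hR'bij : Function.Bijective R')
    (hRbraid : Braid R) (hR'braid : Braid R')
    (hRHecke : (R - q • LinearMap.id) ∘ₗ (R + q⁻¹ • LinearMap.id) = 0)
    (hR'Hecke : (R' - q • LinearMap.id) ∘ₗ (R' + q⁻¹ • LinearMap.id) = 0)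
    (Q : (X × Y) ⊗[k] (X × Y) →ₗ[k] (X × Y) ⊗[k] (X × Y))
    (hXX : Q ∘ₗ TensorProduct.map (LinearMap.inl k X Y) (LinearMap.inl k X Y) =
      TensorProduct.map (LinearMap.inl k X Y) (LinearMap.inl k X Y) ∘ₗ R)
    (hYY : Q ∘ₗ TensorProduct.map (LinearMap.inr k X Y) (LinearMap.inr k X Y) =
      TensorProduct.map (LinearMap.inr k X Y) (LinearMap.inr k X Y) ∘ₗ R')
    (hXY : ∀ (x : X) (y : Y),
      Q ((x, (0 : Y)) ⊗ₜ[k] ((0 : X), y)) = ((0 : X), y) ⊗ₜ[k] (x, (0 : Y)))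
    (hYX : ∀ (y : Y) (x : X),
      Q (((0 : X), y) ⊗ₜ[k] (x, (0 : Y))) =
        (x, (0 : Y)) ⊗ₜ[k] ((0 : X), y) +
          (q - q⁻¹) • (((0 : X), y) ⊗ₜ[k] (x, (0 : Y)))) :
    (Q - q • LinearMap.id) ∘ₗ (Q + q⁻¹ • LinearMap.id) = 0 := by
  set ι := TensorProduct.map (LinearMap.inl k X Y) (LinearMap.inl k X Y) with hι
  set κ := TensorProduct.map (LinearMap.inr k X Y) (LinearMap.inr k X Y) with hκ
  set P := (Q - q • LinearMap.id) ∘ₗ (Q + q⁻¹ • LinearMap.id) with hP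
  have hXXzero : P ∘ₗ ι = 0 := by
    have h1 : (Q + q⁻¹ • LinearMap.id) ∘ₗ ι = ι ∘ₗ (R + q⁻¹ • LinearMap.id) := by
      rw [add_comp, comp_add, hXX, smul_comp, comp_smul, id_comp, comp_id]
    have h2 : (Q - q • LinearMap.id) ∘ₗ ι = ι ∘ₗ (R - q • LinearMap.id) := by
      rw [sub_comp, comp_sub, hXX, smul_comp, comp_smul, id_comp, comp_id]
    calc P ∘ₗ ι = (Q - q • LinearMap.id) ∘ₗ ((Q + q⁻¹ • LinearMap.id) ∘ₗ ι) := by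
          rw [hP, comp_assoc]
      _ = ((Q - q • LinearMap.id) ∘ₗ ι) ∘ₗ (R + q⁻¹ • LinearMap.id) := by
          rw [h1, comp_assoc]
      _ = ι ∘ₗ ((R - q • LinearMap.id) ∘ₗ (R + q⁻¹ • LinearMap.id)) := by
          rw [h2, comp_assoc]
      _ = 0 := by rw [hRHecke, comp_zero]
  have hYYzero : P ∘ₗ κ = 0 := by
    have h1 : (Q + q⁻¹ • LinearMap.id) ∘ₗ κ = κ ∘ₗ (R' + q⁻¹ • LinearMap.id) := by
      rw [add_comp, comp_add, hYY, smul_comp, comp_smul, id_comp, comp_id]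
    have h2 : (Q - q • LinearMap.id) ∘ₗ κ = κ ∘ₗ (R' - q • LinearMap.id) := by
      rw [sub_comp, comp_sub, hYY, smul_comp, comp_smul, id_comp, comp_id]
    calc P ∘ₗ κ = (Q - q • LinearMap.id) ∘ₗ ((Q + q⁻¹ • LinearMap.id) ∘ₗ κ) := by
          rw [hP, comp_assoc]
      _ = ((Q - q • LinearMap.id) ∘ₗ κ) ∘ₗ (R' + q⁻¹ • LinearMap.id) := by
          rw [h1, comp_assoc]
      _ = κ ∘ₗ ((R' - q • LinearMap.id) ∘ₗ (R' + q⁻¹ • LinearMap.id)) := by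
          rw [h2, comp_assoc]
      _ = 0 := by rw [hR'Hecke, comp_zero]
  have hxx : ∀ (x x' : X), P ((x, (0:Y)) ⊗ₜ[k] (x', (0:Y))) = 0 := by
    intro x x'
    have : (x, (0:Y)) ⊗ₜ[k] (x', (0:Y)) = ι (x ⊗ₜ[k] x') := by
      simp [hι, TensorProduct.map_tmul]
    rw [this, ← comp_apply, hXXzero, LinearMap.zero_apply]
  have hyy : ∀ (y y' : Y), P (((0:X), y) ⊗ₜ[k] ((0:X), y')) = 0 := by
    intro y y'
    have : ((0:X), y) ⊗ₜ[k] ((0:X), y') = κ (y ⊗ₜ[k] y') := by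
      simp [hκ, TensorProduct.map_tmul]
    rw [this, ← comp_apply, hYYzero, LinearMap.zero_apply]
  have hxy : ∀ (x : X) (y : Y), P ((x, (0:Y)) ⊗ₜ[k] ((0:X), y)) = 0 := by
    intro x y
    simp only [hP, comp_apply, LinearMap.add_apply, LinearMap.sub_apply, LinearMap.smul_apply, id_apply]
    rw [hXY x y, map_add, map_smul, hYX y x, hXY x y]
    match_scalars <;> field_simp <;> ring
  have hyx : ∀ (y : Y) (x : X), P (((0:X), y) ⊗ₜ[k] (x, (0:Y))) = 0 := by
    intro y x
    simp only [hP, comp_apply, LinearMap.add_apply, LinearMap.sub_apply, LinearMap.smul_apply, id_apply]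
    rw [hYX y x, map_add, map_add, map_smul, map_smul, hXY x y, hYX y x]
    match_scalars <;> field_simp <;> ring

  apply TensorProduct.ext'
  intro a b
  obtain ⟨ax, ay⟩ := a
  obtain ⟨bx, by'⟩ := b
  have ha : ((ax, ay) : X × Y) = (ax, 0) + (0, ay) := by simp
  have hb : ((bx, by') : X × Y) = (bx, 0) + (0, by') := by simp
  rw [ha, hb, TensorProduct.add_tmul, TensorProduct.tmul_add, TensorProduct.tmul_add,
    map_add, map_add, map_add, hxx, hxy, hyx, hyy]
  simp
end

section
/- Let R ∈ Mₘ⊗Mₘ and R' ∈ Mₙ⊗Mₙ. In the tensor product algebra A(R:R') ⊗ A(R':R) of the rectangular quantum matrix algebras, the elements a^i_j := Σ_{a'} b^i_{a'} ⊗ c^{a'}_j satisfy the relations of A(R), i.e. t^i_j ↦ a^i_j extends to an algebra homomorphism A(R) → A(R:R') ⊗ A(R':R). -/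
open scoped TensorProduct

/-- The FRT relations `R t₁ t₂ = t₂ t₁ R'` for an `α × β` rectangular quantum
matrix algebra, i.e. `R^i_a{}^k_b t^a_{j} t^b_{l} = t^k_{b'} t^i_{a'} R'^{a'}_{j}{}^{b'}_{l}`,
where `R ((i,k),(a,b)) = R^i_a{}^k_b`. For `α = β` and `R' = R` these are the
relations of the quantum matrix bialgebra `A(R)`. -/
inductive FRTRel (k : Type*) [Field k] {α β : Type*} [Fintype α] [Fintype β]
    (R : Matrix (α × α) (α × α) k) (R' : Matrix (β × β) (β × β) k) :
    FreeAlgebra k (α × β) → FreeAlgebra k (α × β) → Prop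
  | frt (i k' : α) (j l : β) :
      FRTRel k R R'
        (∑ a : α, ∑ b : α,
          R (i, k') (a, b) • (FreeAlgebra.ι k (a, j) * FreeAlgebra.ι k (b, l)))
        (∑ a' : β, ∑ b' : β,
          R' (a', b') (j, l) • (FreeAlgebra.ι k (k', b') * FreeAlgebra.ι k (i, a')))

/-- The rectangular quantum matrix algebra `A(R:R')`; for `R' = R` this is the
FRT bialgebra `A(R)`. -/
abbrev RectQM (k : Type*) [Field k] {α β : Type*} [Fintype α] [Fintype β]
    (R : Matrix (α × α) (α × α) k) (R' : Matrix (β × β) (β × β) k) :=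
  RingQuot (FRTRel k R R')

/-- The generator `t^i_j` of `A(R:R')`. -/
noncomputable def qmGen (k : Type*) [Field k] {α β : Type*} [Fintype α] [Fintype β]
    (R : Matrix (α × α) (α × α) k) (R' : Matrix (β × β) (β × β) k) (i : α) (j : β) :
    RectQM k R R' :=
  RingQuot.mkAlgHom k (FRTRel k R R') (FreeAlgebra.ι k (i, j))

lemma qm_rel (k : Type*) [Field k] {α β : Type*} [Fintype α] [Fintype β]
    (R : Matrix (α × α) (α × α) k) (R' : Matrix (β × β) (β × β) k) (i k' : α) (j l : β) :
    ∑ a : α, ∑ b : α, R (i, k') (a, b) • (qmGen k R R' a j * qmGen k R R' b l) =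
    ∑ a' : β, ∑ b' : β, R' (a', b') (j, l) • (qmGen k R R' k' b' * qmGen k R R' i a') := by
  have h := RingQuot.mkAlgHom_rel k (FRTRel.frt (R := R) (R' := R') i k' j l)
  simpa [qmGen, map_sum, map_smul, map_mul] using h

lemma sum4_comm {M : Type*} [AddCommMonoid M] {ι₁ ι₂ ι₃ ι₄ : Type*}
    [Fintype ι₁] [Fintype ι₂] [Fintype ι₃] [Fintype ι₄]
    (f : ι₁ → ι₂ → ι₃ → ι₄ → M) :
    ∑ a : ι₁, ∑ b : ι₂, ∑ p : ι₃, ∑ q : ι₄, f a b p q =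
    ∑ p : ι₃, ∑ q : ι₄, ∑ a : ι₁, ∑ b : ι₂, f a b p q := by
  calc ∑ a : ι₁, ∑ b : ι₂, ∑ p : ι₃, ∑ q : ι₄, f a b p q
      = ∑ a : ι₁, ∑ p : ι₃, ∑ b : ι₂, ∑ q : ι₄, f a b p q :=
        Finset.sum_congr rfl fun _ _ => Finset.sum_comm
    _ = ∑ p : ι₃, ∑ a : ι₁, ∑ b : ι₂, ∑ q : ι₄, f a b p q := Finset.sum_comm
    _ = ∑ p : ι₃, ∑ a : ι₁, ∑ q : ι₄, ∑ b : ι₂, f a b p q :=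
        Finset.sum_congr rfl fun _ _ => Finset.sum_congr rfl fun _ _ => Finset.sum_comm
    _ = ∑ p : ι₃, ∑ q : ι₄, ∑ a : ι₁, ∑ b : ι₂, f a b p q :=
        Finset.sum_congr rfl fun _ _ => Finset.sum_comm

set_option maxHeartbeats 1000000 in
lemma middle (k : Type*) [Field k] {α β : Type*} [Fintype α] [Fintype β]
    (R : Matrix (α × α) (α × α) k) (R' : Matrix (β × β) (β × β) k) (i k' j l : α) :
    ∑ a : α, ∑ b : α, R (i, k') (a, b) •
      ((∑ p : β, qmGen k R R' a p ⊗ₜ[k] qmGen k R' R p j) *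
       (∑ q : β, qmGen k R R' b q ⊗ₜ[k] qmGen k R' R q l)) =
    ∑ a' : α, ∑ b' : α, R (a', b') (j, l) •
      ((∑ p : β, qmGen k R R' k' p ⊗ₜ[k] qmGen k R' R p b') *
       (∑ q : β, qmGen k R R' i q ⊗ₜ[k] qmGen k R' R q a')) := by
  set B := qmGen k R R' with hB
  set C := qmGen k R' R with hC
  calc
    ∑ a : α, ∑ b : α, R (i, k') (a, b) •
        ((∑ p : β, B a p ⊗ₜ[k] C p j) * (∑ q : β, B b q ⊗ₜ[k] C q l))
      = ∑ p : β, ∑ q : β,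
          (∑ a : α, ∑ b : α, R (i, k') (a, b) • (B a p * B b q)) ⊗ₜ[k] (C p j * C q l) := by
        simp_rw [Finset.sum_mul_sum, Algebra.TensorProduct.tmul_mul_tmul, Finset.smul_sum,
          TensorProduct.smul_tmul', TensorProduct.sum_tmul]
        exact sum4_comm _
    _ = ∑ p : β, ∑ q : β,
          (∑ p' : β, ∑ q' : β, R' (p', q') (p, q) • (B k' q' * B i p')) ⊗ₜ[k]
            (C p j * C q l) := by
        exact Finset.sum_congr rfl fun p _ => Finset.sum_congr rfl fun q _ =>
          congrArg (fun x => x ⊗ₜ[k] (C p j * C q l)) (qm_rel k R R' i k' p q)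
    _ = ∑ p' : β, ∑ q' : β, (B k' q' * B i p') ⊗ₜ[k]
          (∑ p : β, ∑ q : β, R' (p', q') (p, q) • (C p j * C q l)) := by
        simp_rw [TensorProduct.sum_tmul, TensorProduct.smul_tmul]
        rw [sum4_comm]
        simp_rw [← TensorProduct.tmul_sum]
    _ = ∑ p' : β, ∑ q' : β, (B k' q' * B i p') ⊗ₜ[k]
          (∑ a' : α, ∑ b' : α, R (a', b') (j, l) • (C q' b' * C p' a')) := by
        exact Finset.sum_congr rfl fun p' _ => Finset.sum_congr rfl fun q' _ =>
          congrArg (fun x => (B k' q' * B i p') ⊗ₜ[k] x) (qm_rel k R' R p' q' j l)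
    _ = ∑ s : β, ∑ t : β, (B k' s * B i t) ⊗ₜ[k]
          (∑ a' : α, ∑ b' : α, R (a', b') (j, l) • (C s b' * C t a')) := by
        rw [Finset.sum_comm]
    _ = ∑ a' : α, ∑ b' : α, R (a', b') (j, l) •
          ((∑ p : β, B k' p ⊗ₜ[k] C p b') * (∑ q : β, B i q ⊗ₜ[k] C q a')) := by
        simp_rw [Finset.sum_mul_sum, Algebra.TensorProduct.tmul_mul_tmul, Finset.smul_sum]
        simp_rw [← TensorProduct.tmul_smul]
        simp_rw [TensorProduct.tmul_sum]
        exact sum4_comm _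


/-- the map `t^i_j ↦ Σ_{a'} b^i_{a'} ⊗ c^{a'}_j` extends to an
algebra homomorphism `A(R) → A(R:R') ⊗ A(R':R)`. -/
theorem stmt15 {k : Type*} [Field k] {m n : ℕ}
    (R : Matrix ((Fin m) × (Fin m)) ((Fin m) × (Fin m)) k)
    (R' : Matrix ((Fin n) × (Fin n)) ((Fin n) × (Fin n)) k) :
    ∃ f : RectQM k R R →ₐ[k] (RectQM k R R' ⊗[k] RectQM k R' R),
      ∀ (i j : Fin m),
        f (qmGen k R R i j) =
          ∑ a' : Fin n, qmGen k R R' i a' ⊗ₜ[k] qmGen k R' R a' j := by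
  refine ⟨RingQuot.liftAlgHom k
    ⟨FreeAlgebra.lift k fun p => ∑ a' : Fin n, qmGen k R R' p.1 a' ⊗ₜ[k] qmGen k R' R a' p.2,
      ?_⟩, ?_⟩
  · rintro x y ⟨i, k', j, l⟩
    simp only [map_sum, map_smul, map_mul, FreeAlgebra.lift_ι_apply]
    exact middle k R R' i k' j l
  · intro i j
    simp [qmGen, RingQuot.liftAlgHom_mkAlgHom_apply]
end

section
/- Let R, R' be matrices of q-Hecke Yang-Baxter operators of sizes m, n. Then the covector algebra V̌(R ⊕_q R') is isomorphic to the Z-graded braided tensor product V̌(R) ⊗_q V̌(R'): explicitly, it is generated by x₁,...,xₘ and y₁,...,yₙ with relations q x₁x₂ = x₂x₁R, q y₁y₂ = y₂y₁R' (in compact notation), together with the cross relations yᵢ xⱼ = q xⱼ yᵢ for all i, j. -/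
open scoped TensorProduct

section

variable {k : Type*} [Field k] {ι : Type*} [Fintype ι] [DecidableEq ι]

/-- `R₁₂ = R ⊗ 1` as a matrix on the threefold tensor product. -/
def pos12 (M : Matrix (ι × ι) (ι × ι) k) : Matrix (ι × ι × ι) (ι × ι × ι) k :=
  fun x y => M (x.1, x.2.1) (y.1, y.2.1) * (if x.2.2 = y.2.2 then 1 else 0)

/-- `R₁₃`, acting on the first and third tensor factors. -/
def pos13 (M : Matrix (ι × ι) (ι × ι) k) : Matrix (ι × ι × ι) (ι × ι × ι) k :=
  fun x y => M (x.1, x.2.2) (y.1, y.2.2) * (if x.2.1 = y.2.1 then 1 else 0)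

/-- `R₂₃ = 1 ⊗ R` as a matrix on the threefold tensor product. -/
def pos23 (M : Matrix (ι × ι) (ι × ι) k) : Matrix (ι × ι × ι) (ι × ι × ι) k :=
  fun x y => M (x.2.1, x.2.2) (y.2.1, y.2.2) * (if x.1 = y.1 then 1 else 0)

/-- The quantum Yang-Baxter equation `R₁₂R₁₃R₂₃ = R₂₃R₁₃R₁₂` in matrix form. -/
def MatrixQYBE (M : Matrix (ι × ι) (ι × ι) k) : Prop :=
  pos12 M * pos13 M * pos23 M = pos23 M * pos13 M * pos12 M

/-- The flip matrix `P(x⊗y) = y⊗x`. -/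
def flipMat' : Matrix (ι × ι) (ι × ι) k :=
  fun p r => if p.1 = r.2 ∧ p.2 = r.1 then 1 else 0

/-- `M` is the matrix of a `q`-Hecke Yang-Baxter operator: it satisfies the
QYBE, is invertible, and its braiding `Ř = P∘M` satisfies `(Ř−q)(Ř+q⁻¹)=0`. -/
def IsHeckeYB (q : k) (M : Matrix (ι × ι) (ι × ι) k) : Prop :=
  MatrixQYBE M ∧ IsUnit M ∧
    (flipMat' * M - q • (1 : Matrix (ι × ι) (ι × ι) k)) *
      (flipMat' * M + q⁻¹ • (1 : Matrix (ι × ι) (ι × ι) k)) = 0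

end

/-- The glued R-matrix `R ⊕_q R'` (in numeric R-matrix form, with blocks
`R`, `1`, `(q−q⁻¹)P`, `1`, `R'` as in the paper). -/
def glueRmat {k : Type*} [Field k] (q : k) {α β : Type*} [DecidableEq α] [DecidableEq β]
    (R : Matrix (α × α) (α × α) k) (R' : Matrix (β × β) (β × β) k) :
    Matrix ((α ⊕ β) × (α ⊕ β)) ((α ⊕ β) × (α ⊕ β)) k :=
  fun p r =>
    match p, r with
    | (.inl i, .inl k'), (.inl j, .inl l) => R (i, k') (j, l)
    | (.inr i, .inr k'), (.inr j, .inr l) => R' (i, k') (j, l)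
    | (.inl i, .inr k'), (.inl j, .inr l) => if i = j ∧ k' = l then 1 else 0
    | (.inr i, .inl k'), (.inr j, .inl l) => if i = j ∧ k' = l then 1 else 0
    | (.inl i, .inr k'), (.inr j, .inl l) => if i = l ∧ k' = j then q - q⁻¹ else 0
    | _, _ => 0

/-- The relations `q·xⱼxₗ = x_b x_a R^a_j{}^b_l` of the quantum covector
algebra `V̌(R)`. -/
inductive CovRel (k : Type*) [Field k] {α : Type*} [Fintype α] (q : k)
    (R : Matrix (α × α) (α × α) k) :
    FreeAlgebra k α → FreeAlgebra k α → Prop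
  | rel (j l : α) :
      CovRel k q R
        (q • (FreeAlgebra.ι k j * FreeAlgebra.ι k l))
        (∑ a : α, ∑ b : α, R (a, b) (j, l) • (FreeAlgebra.ι k b * FreeAlgebra.ι k a))

/-- The quantum covector algebra `V̌(R)`. -/
abbrev CovAlg (k : Type*) [Field k] {α : Type*} [Fintype α] (q : k)
    (R : Matrix (α × α) (α × α) k) :=
  RingQuot (CovRel k q R)

/-- The generator `x_i` of `V̌(R)`. -/
noncomputable def covGen (k : Type*) [Field k] {α : Type*} [Fintype α] (q : k)
    (R : Matrix (α × α) (α × α) k) (i : α) : CovAlg k q R :=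
  RingQuot.mkAlgHom k (CovRel k q R) (FreeAlgebra.ι k i)

/-- The relations of the `ℤ`-graded braided tensor product `V̌(R) ⊗_q V̌(R')`:
the relations of `V̌(R)` on the `x`'s, those of `V̌(R')` on the `y`'s, and the
cross relations `yᵢxⱼ = q·xⱼyᵢ`. -/
inductive GradedRel (k : Type*) [Field k] {m n : ℕ} (q : k)
    (R : Matrix ((Fin m) × (Fin m)) ((Fin m) × (Fin m)) k)
    (R' : Matrix ((Fin n) × (Fin n)) ((Fin n) × (Fin n)) k) :
    FreeAlgebra k (Fin m ⊕ Fin n) → FreeAlgebra k (Fin m ⊕ Fin n) → Prop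
  | relX (j l : Fin m) :
      GradedRel k q R R'
        (q • (FreeAlgebra.ι k (Sum.inl j : Fin m ⊕ Fin n) * FreeAlgebra.ι k (Sum.inl l)))
        (∑ a : Fin m, ∑ b : Fin m,
          R (a, b) (j, l) • (FreeAlgebra.ι k (Sum.inl b : Fin m ⊕ Fin n) * FreeAlgebra.ι k (Sum.inl a)))
  | relY (j l : Fin n) :
      GradedRel k q R R'
        (q • (FreeAlgebra.ι k (Sum.inr j : Fin m ⊕ Fin n) * FreeAlgebra.ι k (Sum.inr l)))
        (∑ a : Fin n, ∑ b : Fin n,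
          R' (a, b) (j, l) • (FreeAlgebra.ι k (Sum.inr b : Fin m ⊕ Fin n) * FreeAlgebra.ι k (Sum.inr a)))
  | cross (i : Fin n) (j : Fin m) :
      GradedRel k q R R'
        (FreeAlgebra.ι k (Sum.inr i : Fin m ⊕ Fin n) * FreeAlgebra.ι k (Sum.inl j))
        (q • (FreeAlgebra.ι k (Sum.inl j : Fin m ⊕ Fin n) * FreeAlgebra.ι k (Sum.inr i)))


section GlueAux

variable {k : Type*} [Field k] {m n : ℕ} (q : k)
  (R : Matrix ((Fin m) × (Fin m)) ((Fin m) × (Fin m)) k)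
  (R' : Matrix ((Fin n) × (Fin n)) ((Fin n) × (Fin n)) k)
  {M : Type*} [AddCommMonoid M] [Module k M]

lemma glue_sum_ll (f : (Fin m ⊕ Fin n) → (Fin m ⊕ Fin n) → M) (j l : Fin m) :
    ∑ A : Fin m ⊕ Fin n, ∑ B : Fin m ⊕ Fin n,
        glueRmat q R R' (A, B) (Sum.inl j, Sum.inl l) • f A B
      = ∑ a : Fin m, ∑ b : Fin m, R (a, b) (j, l) • f (Sum.inl a) (Sum.inl b) := by
  rw [Fintype.sum_sum_type]
  simp [Fintype.sum_sum_type, glueRmat]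

lemma glue_sum_rr (f : (Fin m ⊕ Fin n) → (Fin m ⊕ Fin n) → M) (j l : Fin n) :
    ∑ A : Fin m ⊕ Fin n, ∑ B : Fin m ⊕ Fin n,
        glueRmat q R R' (A, B) (Sum.inr j, Sum.inr l) • f A B
      = ∑ a : Fin n, ∑ b : Fin n, R' (a, b) (j, l) • f (Sum.inr a) (Sum.inr b) := by
  rw [Fintype.sum_sum_type]
  simp [Fintype.sum_sum_type, glueRmat]

lemma glue_sum_lr (f : (Fin m ⊕ Fin n) → (Fin m ⊕ Fin n) → M) (j : Fin m) (l : Fin n) :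
    ∑ A : Fin m ⊕ Fin n, ∑ B : Fin m ⊕ Fin n,
        glueRmat q R R' (A, B) (Sum.inl j, Sum.inr l) • f A B
      = f (Sum.inl j) (Sum.inr l) := by
  rw [Fintype.sum_sum_type]
  simp [Fintype.sum_sum_type, glueRmat, ite_smul, ite_and, Finset.sum_ite_eq, Finset.sum_ite_eq']

lemma glue_sum_rl (f : (Fin m ⊕ Fin n) → (Fin m ⊕ Fin n) → M) (j : Fin n) (l : Fin m) :
    ∑ A : Fin m ⊕ Fin n, ∑ B : Fin m ⊕ Fin n,
        glueRmat q R R' (A, B) (Sum.inr j, Sum.inl l) • f A B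
      = (q - q⁻¹) • f (Sum.inl l) (Sum.inr j) + f (Sum.inr j) (Sum.inl l) := by
  rw [Fintype.sum_sum_type]
  simp [Fintype.sum_sum_type, glueRmat, ite_smul, ite_and, Finset.sum_ite_eq, Finset.sum_ite_eq']

end GlueAux

/-- for matrices of `q`-Hecke Yang-Baxter operators `R`, `R'`, the
covector algebra `V̌(R ⊕_q R')` is isomorphic (by a generator-preserving
isomorphism) to the `ℤ`-graded braided tensor product `V̌(R) ⊗_q V̌(R')`,
presented by generators `x₁,…,xₘ,y₁,…,yₙ` with the relations of `V̌(R)` and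
`V̌(R')` and the cross relations `yᵢxⱼ = q·xⱼyᵢ`. -/
theorem stmt17 {k : Type*} [Field k] (q : k) (hq : q ≠ 0) {m n : ℕ}
    (R : Matrix ((Fin m) × (Fin m)) ((Fin m) × (Fin m)) k)
    (R' : Matrix ((Fin n) × (Fin n)) ((Fin n) × (Fin n)) k)
    (hR : IsHeckeYB q R) (hR' : IsHeckeYB q R') :
    ∃ e : CovAlg k q (glueRmat q R R') ≃ₐ[k] RingQuot (GradedRel k q R R'),
      ∀ I : Fin m ⊕ Fin n,
        e (covGen k q (glueRmat q R R') I) =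
          RingQuot.mkAlgHom k (GradedRel k q R R') (FreeAlgebra.ι k I) := by
  classical
  have cross : ∀ (i : Fin n) (j : Fin m),
      RingQuot.mkAlgHom k (GradedRel k q R R')
          (FreeAlgebra.ι k (Sum.inr i : Fin m ⊕ Fin n) * FreeAlgebra.ι k (Sum.inl j))
        = q • RingQuot.mkAlgHom k (GradedRel k q R R')
            (FreeAlgebra.ι k (Sum.inl j : Fin m ⊕ Fin n) * FreeAlgebra.ι k (Sum.inr i)) := by
    intro i j
    have h := RingQuot.mkAlgHom_rel k (GradedRel.cross (k := k) (q := q) (R := R) (R' := R') i j)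
    simpa [map_smul] using h
  have hfwd : ∀ ⦃x y⦄, CovRel k q (glueRmat q R R') x y →
      RingQuot.mkAlgHom k (GradedRel k q R R') x = RingQuot.mkAlgHom k (GradedRel k q R R') y := by
    rintro _ _ ⟨J, L⟩
    rcases J with j | j <;> rcases L with l | l
    · rw [glue_sum_ll]
      exact RingQuot.mkAlgHom_rel k (GradedRel.relX j l)
    · rw [glue_sum_lr, map_smul, cross l j]
    · rw [glue_sum_rl, map_smul, map_add, map_smul, cross j l, smul_smul, smul_smul]
      have hc : q * q = (q - q⁻¹) * q + 1 := by field_simp; ring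
      rw [hc, add_smul, one_smul]
    · rw [glue_sum_rr]
      exact RingQuot.mkAlgHom_rel k (GradedRel.relY j l)
  have hbwd : ∀ ⦃x y⦄, GradedRel k q R R' x y →
      RingQuot.mkAlgHom k (CovRel k q (glueRmat q R R')) x
        = RingQuot.mkAlgHom k (CovRel k q (glueRmat q R R')) y := by
    rintro _ _ (⟨j, l⟩ | ⟨j, l⟩ | ⟨i, j⟩)
    · have h := RingQuot.mkAlgHom_rel k
        (CovRel.rel (k := k) (q := q) (R := glueRmat q R R') (Sum.inl j) (Sum.inl l))
      rwa [glue_sum_ll] at h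
    · have h := RingQuot.mkAlgHom_rel k
        (CovRel.rel (k := k) (q := q) (R := glueRmat q R R') (Sum.inr j) (Sum.inr l))
      rwa [glue_sum_rr] at h
    · have h := RingQuot.mkAlgHom_rel k
        (CovRel.rel (k := k) (q := q) (R := glueRmat q R R') (Sum.inr i) (Sum.inl j))
      rw [glue_sum_rl, map_smul, map_add, map_smul] at h
      rw [map_smul]
      set u := RingQuot.mkAlgHom k (CovRel k q (glueRmat q R R'))
        (FreeAlgebra.ι k (Sum.inr i : Fin m ⊕ Fin n) * FreeAlgebra.ι k (Sum.inl j)) with hu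
      set v := RingQuot.mkAlgHom k (CovRel k q (glueRmat q R R'))
        (FreeAlgebra.ι k (Sum.inl j : Fin m ⊕ Fin n) * FreeAlgebra.ι k (Sum.inr i)) with hv
      have hveq : v = q⁻¹ • u := by
        have h2 : v = q • u - (q - q⁻¹) • u := by
          rw [h]; abel
        rw [h2]; module
      rw [hveq, smul_smul, mul_inv_cancel₀ hq, one_smul]
  let F : CovAlg k q (glueRmat q R R') →ₐ[k] RingQuot (GradedRel k q R R') :=
    RingQuot.liftAlgHom k ⟨RingQuot.mkAlgHom k (GradedRel k q R R'), hfwd⟩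
  let G : RingQuot (GradedRel k q R R') →ₐ[k] CovAlg k q (glueRmat q R R') :=
    RingQuot.liftAlgHom k ⟨RingQuot.mkAlgHom k (CovRel k q (glueRmat q R R')), hbwd⟩
  have hFG : F.comp G = AlgHom.id k _ := by
    apply RingQuot.ringQuot_ext'
    apply FreeAlgebra.hom_ext
    funext I
    simp [F, G, RingQuot.liftAlgHom_mkAlgHom_apply]
  have hGF : G.comp F = AlgHom.id k _ := by
    apply RingQuot.ringQuot_ext'
    apply FreeAlgebra.hom_ext
    funext I
    simp [F, G, RingQuot.liftAlgHom_mkAlgHom_apply]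
  refine ⟨AlgEquiv.ofAlgHom F G hFG hGF, ?_⟩
  intro I
  show F (covGen k q (glueRmat q R R') I) = _
  simp [F, covGen, RingQuot.liftAlgHom_mkAlgHom_apply]
end
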